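/- Work in the Euclidean plane ℝ². Fix real numbers a < b and radii r₁, r₂ > 0 with b − a > r₁ + r₂, and let D₁ and D₂ be the closed disks of radius r₁ and r₂ centered at c₁ = (a,0) and c₂ = (b,0) respectively. Let T be the common internal tangent of D₁ and D₂ that is above D₁ and below D₂, given as the graph of an affine function t. Then every line L that intersects both D₁ and D₂ lies on or above T to the right of D₂: for every point (x, y) ∈ L with x > b one has y ≥ t(x). -/

import Mathlib

private lemma helper_sq_le {w y r : ℝ} (h : w ^ 2 + y ^ 2 ≤ r ^ 2) (hr : 0 < r) : w ≤ r := by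
  nlinarith [sq_nonneg y, sq_nonneg (w - r), sq_nonneg (w + r)]

private lemma helper_offset {w y r σ : ℝ} (h : w ^ 2 + y ^ 2 ≤ r ^ 2) :
    (y - σ * w) ^ 2 ≤ r ^ 2 * (1 + σ ^ 2) := by
  nlinarith [sq_nonneg (σ * y + w), mul_le_mul_of_nonneg_left h (sq_nonneg σ)]

private lemma helper_slope {u v r₁ r₂ S : ℝ} (hr₁ : 0 < r₁) (hr₂ : 0 < r₂) (hS : 0 ≤ S)
    (hu : u ^ 2 ≤ r₁ ^ 2 * S) (hv : v ^ 2 ≤ r₂ ^ 2 * S) :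
    (v - u) ^ 2 ≤ (r₁ + r₂) ^ 2 * S := by
  nlinarith [sq_nonneg (u * r₂ + v * r₁), mul_pos hr₁ hr₂,
    mul_le_mul_of_nonneg_left hu (sq_nonneg r₂),
    mul_le_mul_of_nonneg_left hv (sq_nonneg r₁),
    mul_le_mul_of_nonneg_left hu (mul_pos hr₁ hr₂).le,
    mul_le_mul_of_nonneg_left hv (mul_pos hr₁ hr₂).le]

private lemma helper_sigma_sq {σ m ba R : ℝ} (hba : R < ba) (hR : 0 < R)
    (hbound : σ ^ 2 * ba ^ 2 ≤ R ^ 2 * (1 + σ ^ 2))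
    (hm2 : m ^ 2 * ba ^ 2 = R ^ 2 * (1 + m ^ 2)) : σ ^ 2 ≤ m ^ 2 := by
  have hba2 : R ^ 2 < ba ^ 2 := by nlinarith
  nlinarith [hbound, hm2, hba2, sq_nonneg σ, sq_nonneg m]

private lemma helper_neg_mul {x y z : ℝ} (h : x * y = -z) (hy : 0 < y) (hz : 0 < z) : x < 0 := by
  nlinarith

private lemma helper_ge_of_sq {σ m : ℝ} (h : σ ^ 2 ≤ m ^ 2) (hm : m < 0) : m ≤ σ := by
  nlinarith

private lemma helper_neg_le {v c : ℝ} (h : v ^ 2 ≤ c ^ 2) (hc : 0 ≤ c) : -c ≤ v := by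
  nlinarith

private lemma infDist_graph_line (m k : ℝ) (c : EuclideanSpace ℝ (Fin 2)) :
    Metric.infDist c {P : EuclideanSpace ℝ (Fin 2) | P 1 = m * P 0 + k}
      = |c 1 - (m * c 0 + k)| / Real.sqrt (1 + m ^ 2) := by
  set N := Real.sqrt (1 + m ^ 2) with hNdef
  have hN : 0 < N := Real.sqrt_pos.2 (by positivity)
  have hN2 : N ^ 2 = 1 + m ^ 2 := Real.sq_sqrt (by positivity)
  set f : ℝ := c 1 - (m * c 0 + k) with hf
  set q : EuclideanSpace ℝ (Fin 2) :=
    (WithLp.equiv 2 (Fin 2 → ℝ)).symm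
      ![c 0 + m * f / (1 + m ^ 2), m * (c 0 + m * f / (1 + m ^ 2)) + k] with hq
  have hq0 : q 0 = c 0 + m * f / (1 + m ^ 2) := rfl
  have hq1 : q 1 = m * (c 0 + m * f / (1 + m ^ 2)) + k := rfl
  have hqmem : q ∈ {P : EuclideanSpace ℝ (Fin 2) | P 1 = m * P 0 + k} := by
    simp [Set.mem_setOf_eq, hq1, hq0]
  have hm1 : (0:ℝ) < 1 + m ^ 2 := by positivity
  have hdistq : dist c q = |f| / N := by
    rw [EuclideanSpace.dist_eq, Fin.sum_univ_two, hq0, hq1, Real.dist_eq, Real.dist_eq,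
      sq_abs, sq_abs]
    have h1 : c 0 - (c 0 + m * f / (1 + m ^ 2)) = -(m * f) / (1 + m ^ 2) := by ring
    have h2 : c 1 - (m * (c 0 + m * f / (1 + m ^ 2)) + k) = f / (1 + m ^ 2) := by
      field_simp [hf]; ring
    have h3 : (-(m * f) / (1 + m ^ 2)) ^ 2 + (f / (1 + m ^ 2)) ^ 2 = f ^ 2 / (1 + m ^ 2) := by
      field_simp; ring
    rw [h1, h2, h3, Real.sqrt_div (sq_nonneg f), Real.sqrt_sq_eq_abs]
  have hlow : ∀ P ∈ {P : EuclideanSpace ℝ (Fin 2) | P 1 = m * P 0 + k},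
      |f| / N ≤ dist c P := by
    intro P hP
    have hP' : P 1 = m * P 0 + k := hP
    have hd : dist c P = Real.sqrt ((c 0 - P 0) ^ 2 + (c 1 - P 1) ^ 2) := by
      rw [EuclideanSpace.dist_eq, Fin.sum_univ_two, Real.dist_eq, Real.dist_eq, sq_abs, sq_abs]
    have hdsq : dist c P ^ 2 = (c 0 - P 0) ^ 2 + (c 1 - P 1) ^ 2 := by
      rw [hd, Real.sq_sqrt (by positivity)]
    have hfd : f ^ 2 ≤ (N * dist c P) ^ 2 := by
      have heq : f = (c 1 - P 1) - m * (c 0 - P 0) := by rw [hf, hP']; ring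
      have key : ((c 1 - P 1) - m * (c 0 - P 0)) ^ 2
          ≤ (1 + m ^ 2) * ((c 0 - P 0) ^ 2 + (c 1 - P 1) ^ 2) := by
        nlinarith [sq_nonneg (m * (c 1 - P 1) + (c 0 - P 0))]
      rw [heq, mul_pow, hN2, hdsq]
      exact key
    have habs : |f| ≤ N * dist c P := by
      calc |f| = Real.sqrt (f ^ 2) := (Real.sqrt_sq_eq_abs f).symm
        _ ≤ Real.sqrt ((N * dist c P) ^ 2) := Real.sqrt_le_sqrt hfd
        _ = N * dist c P := Real.sqrt_sq (by positivity)
    rw [div_le_iff₀ hN]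
    linarith [habs]
  refine le_antisymm ((Metric.infDist_le_dist_of_mem hqmem).trans hdistq.le) ?_
  by_contra h
  push_neg at h
  obtain ⟨y, hy, hylt⟩ := (Metric.infDist_lt_iff ⟨q, hqmem⟩).1 h
  exact absurd hylt (not_lt.2 (hlow y hy))

set_option maxHeartbeats 1000000 in
/-- The key claim in the proof of Lemma 1 of the paper: any line passing through both
disks lies on or above their common internal tangent to the right of the second disk. -/
theorem line_through_disks_above_tangent
    (a b r₁ r₂ m k : ℝ) (hab : a < b) (hr₁ : 0 < r₁) (hr₂ : 0 < r₂)
    (hsep : r₁ + r₂ < b - a)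
    (c₁ c₂ : EuclideanSpace ℝ (Fin 2))
    (hc₁ : c₁ = (WithLp.equiv 2 (Fin 2 → ℝ)).symm ![a, 0])
    (hc₂ : c₂ = (WithLp.equiv 2 (Fin 2 → ℝ)).symm ![b, 0])
    (T : Set (EuclideanSpace ℝ (Fin 2)))
    (hT : T = {P : EuclideanSpace ℝ (Fin 2) | P 1 = m * P 0 + k})
    (htan₁ : Metric.infDist c₁ T = r₁)
    (htan₂ : Metric.infDist c₂ T = r₂)
    (hbelow : c₁ 1 < m * c₁ 0 + k)
    (habove : m * c₂ 0 + k < c₂ 1) :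
    ∀ (p d : EuclideanSpace ℝ (Fin 2)) (t₁ t₂ : ℝ), d ≠ 0 →
      p + t₁ • d ∈ Metric.closedBall c₁ r₁ →
      p + t₂ • d ∈ Metric.closedBall c₂ r₂ →
      ∀ s : ℝ, b < (p + s • d) 0 →
        m * (p + s • d) 0 + k ≤ (p + s • d) 1 := by
  subst hc₁ hc₂ hT
  intro p d t₁ t₂ hd hq₁ hq₂ s hs
  set N := Real.sqrt (1 + m ^ 2) with hNdef
  have hN : 0 < N := Real.sqrt_pos.2 (by positivity)
  have hN2 : N ^ 2 = 1 + m ^ 2 := Real.sq_sqrt (by positivity)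
  have ec₁0 : ((WithLp.equiv 2 (Fin 2 → ℝ)).symm ![a, 0] : EuclideanSpace ℝ (Fin 2)) 0 = a := rfl
  have ec₁1 : ((WithLp.equiv 2 (Fin 2 → ℝ)).symm ![a, 0] : EuclideanSpace ℝ (Fin 2)) 1 = 0 := rfl
  have ec₂0 : ((WithLp.equiv 2 (Fin 2 → ℝ)).symm ![b, 0] : EuclideanSpace ℝ (Fin 2)) 0 = b := rfl
  have ec₂1 : ((WithLp.equiv 2 (Fin 2 → ℝ)).symm ![b, 0] : EuclideanSpace ℝ (Fin 2)) 1 = 0 := rfl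
  rw [infDist_graph_line, ec₁0, ec₁1, ← hNdef] at htan₁
  rw [infDist_graph_line, ec₂0, ec₂1, ← hNdef] at htan₂
  rw [ec₁0, ec₁1] at hbelow
  rw [ec₂0, ec₂1] at habove
  -- tangency equations
  have h₁ : m * a + k = r₁ * N := by
    rw [zero_sub, abs_neg, abs_of_pos hbelow] at htan₁
    field_simp at htan₁
    linarith [htan₁]
  have h₂ : m * b + k = -(r₂ * N) := by
    rw [zero_sub, abs_neg, abs_of_neg habove] at htan₂
    field_simp at htan₂
    linarith [htan₂]
  have hmab : m * (b - a) = -((r₁ + r₂) * N) := by linarith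
  have hmneg : m < 0 :=
    helper_neg_mul hmab (by linarith) (mul_pos (by linarith) hN)
  have hm2 : m ^ 2 * (b - a) ^ 2 = (r₁ + r₂) ^ 2 * (1 + m ^ 2) := by
    linear_combination (m * (b - a) - (r₁ + r₂) * N) * hmab + (r₁ + r₂) ^ 2 * hN2
  -- coordinates of the points on the line
  have e10 : (p + t₁ • d) 0 = p 0 + t₁ * d 0 := rfl
  have e11 : (p + t₁ • d) 1 = p 1 + t₁ * d 1 := rfl
  have e20 : (p + t₂ • d) 0 = p 0 + t₂ * d 0 := rfl
  have e21 : (p + t₂ • d) 1 = p 1 + t₂ * d 1 := rfl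
  have es0 : (p + s • d) 0 = p 0 + s * d 0 := rfl
  have es1 : (p + s • d) 1 = p 1 + s * d 1 := rfl
  rw [es0] at hs
  rw [es0, es1]
  -- disk membership in coordinates
  have h1 : (p 0 + t₁ * d 0 - a) ^ 2 + (p 1 + t₁ * d 1) ^ 2 ≤ r₁ ^ 2 := by
    have h := Metric.mem_closedBall.1 hq₁
    rw [EuclideanSpace.dist_eq, Fin.sum_univ_two, e10, e11, ec₁0, ec₁1, Real.dist_eq,
      Real.dist_eq, sq_abs, sq_abs, sub_zero] at h
    have hnn : (0:ℝ) ≤ (p 0 + t₁ * d 0 - a) ^ 2 + (p 1 + t₁ * d 1) ^ 2 := by positivity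
    calc (p 0 + t₁ * d 0 - a) ^ 2 + (p 1 + t₁ * d 1) ^ 2
        = Real.sqrt ((p 0 + t₁ * d 0 - a) ^ 2 + (p 1 + t₁ * d 1) ^ 2) ^ 2 :=
          (Real.sq_sqrt hnn).symm
      _ ≤ r₁ ^ 2 := pow_le_pow_left₀ (Real.sqrt_nonneg _) h 2
  have h2 : (p 0 + t₂ * d 0 - b) ^ 2 + (p 1 + t₂ * d 1) ^ 2 ≤ r₂ ^ 2 := by
    have h := Metric.mem_closedBall.1 hq₂
    rw [EuclideanSpace.dist_eq, Fin.sum_univ_two, e20, e21, ec₂0, ec₂1, Real.dist_eq,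
      Real.dist_eq, sq_abs, sq_abs, sub_zero] at h
    have hnn : (0:ℝ) ≤ (p 0 + t₂ * d 0 - b) ^ 2 + (p 1 + t₂ * d 1) ^ 2 := by positivity
    calc (p 0 + t₂ * d 0 - b) ^ 2 + (p 1 + t₂ * d 1) ^ 2
        = Real.sqrt ((p 0 + t₂ * d 0 - b) ^ 2 + (p 1 + t₂ * d 1) ^ 2) ^ 2 :=
          (Real.sq_sqrt hnn).symm
      _ ≤ r₂ ^ 2 := pow_le_pow_left₀ (Real.sqrt_nonneg _) h 2
  have hx1 : p 0 + t₁ * d 0 - a ≤ r₁ := helper_sq_le h1 hr₁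
  have hx2 : b - (p 0 + t₂ * d 0) ≤ r₂ := by
    have h2' : (b - (p 0 + t₂ * d 0)) ^ 2 + (p 1 + t₂ * d 1) ^ 2 ≤ r₂ ^ 2 := by
      have : (b - (p 0 + t₂ * d 0)) ^ 2 = (p 0 + t₂ * d 0 - b) ^ 2 := by ring
      rw [this]; exact h2
    exact helper_sq_le h2' hr₂
  have hd0 : d 0 ≠ 0 := by
    intro h0
    rw [h0, mul_zero, add_zero] at hx1 hx2
    linarith
  set σ := d 1 / d 0 with hσdef
  have hd1σ : d 1 = σ * d 0 := by rw [hσdef, div_mul_cancel₀ _ hd0]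
  set u := p 1 + t₁ * d 1 + σ * (a - (p 0 + t₁ * d 0)) with hudef
  set v := p 1 + t₁ * d 1 + σ * (b - (p 0 + t₁ * d 0)) with hvdef
  have hu : u ^ 2 ≤ r₁ ^ 2 * (1 + σ ^ 2) := by
    have := helper_offset (σ := σ) h1
    have e : u = (p 1 + t₁ * d 1) - σ * (p 0 + t₁ * d 0 - a) := by rw [hudef]; ring
    rw [e]; exact this
  have hy2 : p 1 + t₂ * d 1 = p 1 + t₁ * d 1 + σ * ((p 0 + t₂ * d 0) - (p 0 + t₁ * d 0)) := by
    rw [hd1σ]; ring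
  have hv : v ^ 2 ≤ r₂ ^ 2 * (1 + σ ^ 2) := by
    have := helper_offset (σ := σ) h2
    have e : v = (p 1 + t₂ * d 1) - σ * (p 0 + t₂ * d 0 - b) := by rw [hvdef, hy2]; ring
    rw [e]; exact this
  have hvu : v - u = σ * (b - a) := by rw [hudef, hvdef]; ring
  have hbound : σ ^ 2 * (b - a) ^ 2 ≤ (r₁ + r₂) ^ 2 * (1 + σ ^ 2) := by
    have hsl := helper_slope hr₁ hr₂ (by positivity) hu hv
    have e : σ ^ 2 * (b - a) ^ 2 = (v - u) ^ 2 := by rw [hvu]; ring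
    rw [e]; exact hsl
  have hσm : σ ^ 2 ≤ m ^ 2 := helper_sigma_sq hsep (by linarith) hbound hm2
  have hσ_ge : m ≤ σ := helper_ge_of_sq hσm hmneg
  have hvsq : v ^ 2 ≤ (r₂ * N) ^ 2 := by
    have := mul_le_mul_of_nonneg_left hσm (sq_nonneg r₂)
    have e : (r₂ * N) ^ 2 = r₂ ^ 2 * (1 + m ^ 2) := by rw [mul_pow, hN2]
    rw [e]; linarith [hv]
  have hvge : -(r₂ * N) ≤ v := helper_neg_le hvsq (by positivity)
  have hY : p 1 + s * d 1 = v + σ * ((p 0 + s * d 0) - b) := by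
    rw [hvdef, hd1σ]; ring
  have hprod : 0 ≤ (σ - m) * ((p 0 + s * d 0) - b) :=
    mul_nonneg (sub_nonneg.2 hσ_ge) (sub_pos.2 hs).le
  rw [hY]
  have e1 : σ * ((p 0 + s * d 0) - b)
      = (σ - m) * ((p 0 + s * d 0) - b) + m * ((p 0 + s * d 0) - b) := by ring
  have e2 : m * (p 0 + s * d 0) + k = m * ((p 0 + s * d 0) - b) + (m * b + k) := by ring
  linarith [hprod, hvge, h₂, e1, e2]
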